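/- Let d ≥ 4 be an integer, p a prime number, and x₀ ∈ ℚ̄ with x₀^{d−2} − x₀ − p^{−(d−3)} = 0. Let (x_n,y_n)_{n≥0} be a sequence in ℚ̄² with (x_0,y_0) = (x₀,x₀) and, for every n ≥ 1, y_n ≠ 0, x_{n−1} = x_n^d / y_n² − p^{−(d−3)}, and y_{n−1} = x_n. Let t be a real number with either d ≥ 5 and t ≥ 1, or d = 4 and t ≥ (1+√3)/2. Suppose there exist an index n₀ ≥ 0 and a ring embedding σ : ℚ̄ → ℂ such that |σ(y_{n₀})| ≥ (1 + 1/(2t))·|σ(x_{n₀})| and |σ(x_{n₀})| ≥ t. Then: (a) for every real C with 0 < C < (d−1)/2 there is an N such that for every n ≥ N and every number field K ⊆ ℚ̄ containing x_n and y_n, the affine absolute logarithmic Weil height of (x_n,y_n) computed in K is at least C^n; and (b) the set {(x_n,y_n) : n ≥ 0} is Zariski dense in the affine plane over ℚ̄, i.e. the only polynomial in ℚ̄[x,y] vanishing at every (x_n,y_n) is the zero polynomial. -/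

import Mathlib

open NumberField IsDedekindDomain

/-- A fixed algebraic closure of `ℚ`. -/
noncomputable def Qbar : Type := AlgebraicClosure ℚ

noncomputable instance : Field Qbar := inferInstanceAs (Field (AlgebraicClosure ℚ))
noncomputable instance : Algebra ℚ Qbar := inferInstanceAs (Algebra ℚ (AlgebraicClosure ℚ))

/-- The local factor `|a|_v^{[K_v : ℚ_p]} = N(𝔭_v)^{-ord_v(a)}` at a finite place `v`
of a number field `K`; with the normalization `|a|_v = |N_{K_v/ℚ_p}(a)|_p^{1/[K_v:ℚ_p]}`
this is exactly `|a|_v` raised to the local degree `[K_v : ℚ_p]`. -/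
noncomputable def localFin {K : Type*} [Field K] [NumberField K]
    (v : HeightOneSpectrum (𝓞 K)) (a : K) : ℝ :=
  if h : (Ideal.absNorm v.asIdeal : NNReal) ≠ 0 then
    ((WithZeroMulInt.toNNReal h (v.valuation K a) : NNReal) : ℝ)
  else 0

/-- The affine absolute logarithmic Weil height of a tuple of elements of a number field
`K ⊆ ℚ̄`:  `h(a₁,…,a_m) = (1/[K:ℚ]) · ( Σ_w [K_w:ℝ]·log max{1,|a_i|_w}
+ Σ_v log max{1, |a_i|_v^{[K_v:ℚ_p]}} )`, the sums running over the infinite and finite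
places of `K`; this equals `Σ_{v ∈ M_K} ([K_v:ℚ_v]/[K:ℚ]) log max{1,|a_i|_v}` in the
standard normalization. -/
noncomputable def heightK (K : IntermediateField ℚ Qbar) (hfd : FiniteDimensional ℚ K)
    (l : List K) : ℝ :=
  letI : NumberField K := { to_charZero := inferInstance, to_finiteDimensional := hfd }
  (Module.finrank ℚ K : ℝ)⁻¹ *
    ((∑ᶠ w : InfinitePlace K, (w.mult : ℝ) * Real.log ((l.map (fun a => w a)).foldr max 1)) +
     ∑ᶠ v : HeightOneSpectrum (𝓞 K), Real.log ((l.map (fun a => localFin v a)).foldr max 1))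

/-- Being a backward orbit of `(x₀,x₀)` under `f_{d,p}(x,y) = (x^d/y² - p^{-(d-3)}, x)`:
`s 0 = (x₀,x₀)` and, for every `n ≥ 1`, `y_n ≠ 0`, `x_{n-1} = x_n^d/y_n² - p^{-(d-3)}` and
`y_{n-1} = x_n`, i.e. `f_{d,p}(s n) = s (n-1)`. -/
def IsBackwardOrbit (d p : ℕ) (x₀ : Qbar) (s : ℕ → Qbar × Qbar) : Prop :=
  s 0 = (x₀, x₀) ∧
    ∀ n : ℕ, (s (n + 1)).2 ≠ 0 ∧
      (s n).1 = (s (n + 1)).1 ^ d / (s (n + 1)).2 ^ 2 - ((p : Qbar) ^ (d - 3))⁻¹ ∧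
      (s n).2 = (s (n + 1)).1

set_option synthInstance.maxHeartbeats 1000000
set_option maxHeartbeats 3200000

noncomputable def Complex.abs : AbsoluteValue ℂ ℝ := NormedField.toAbsoluteValue ℂ

lemma Complex.abs_natCast (n : ℕ) : Complex.abs (n : ℂ) = n := by
  show ‖(n : ℂ)‖ = n
  exact Complex.norm_natCast n

namespace Stmt17Aux

noncomputable instance : CharZero Qbar := inferInstanceAs (CharZero (AlgebraicClosure ℚ))
instance : Algebra.IsAlgebraic ℚ Qbar :=
  AlgebraicClosure.isAlgebraic ℚ
instance : IsAlgClosed Qbar := inferInstanceAs (IsAlgClosed (AlgebraicClosure ℚ))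

variable {d p : ℕ} {x₀ : Qbar} {s : ℕ → Qbar × Qbar}

lemma c_ne (hd : 4 ≤ d) (hp : p.Prime) : ((p : Qbar) ^ (d - 3))⁻¹ ≠ 0 := by
  apply inv_ne_zero
  apply pow_ne_zero
  exact_mod_cast hp.ne_zero

lemma x0_ne (hd : 4 ≤ d) (hp : p.Prime)
    (hx₀ : x₀ ^ (d - 2) - x₀ - ((p : Qbar) ^ (d - 3))⁻¹ = 0) : x₀ ≠ 0 := by
  intro h
  subst h
  rw [zero_pow (by omega), zero_sub, sub_eq_zero] at hx₀
  exact c_ne hd hp (by rw [← hx₀]; ring)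

lemma orbit_y_ne (hd : 4 ≤ d) (hp : p.Prime)
    (hx₀ : x₀ ^ (d - 2) - x₀ - ((p : Qbar) ^ (d - 3))⁻¹ = 0)
    (hs : IsBackwardOrbit d p x₀ s) : ∀ n, (s n).2 ≠ 0 := by
  intro n
  cases n with
  | zero => rw [hs.1]; exact x0_ne hd hp hx₀
  | succ n => exact (hs.2 n).1

/-- key algebraic relation: `y_{n+1}² (x_n + c) = y_n^d`. -/
lemma key_rel (hs : IsBackwardOrbit d p x₀ s) (n : ℕ) :
    ((s (n+1)).2)^2 * ((s n).1 + ((p : Qbar) ^ (d - 3))⁻¹) = ((s n).2)^d := by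
  obtain ⟨hy, hx, hyx⟩ := hs.2 n
  rw [hx, hyx]
  field_simp
  ring

/-- `x_{n+1} = y_n` -/
lemma x_succ (hs : IsBackwardOrbit d p x₀ s) (n : ℕ) : (s (n+1)).1 = (s n).2 :=
  ((hs.2 n).2.2).symm

lemma x_plus_c_ne (hd : 4 ≤ d) (hp : p.Prime)
    (hx₀ : x₀ ^ (d - 2) - x₀ - ((p : Qbar) ^ (d - 3))⁻¹ = 0)
    (hs : IsBackwardOrbit d p x₀ s) (n : ℕ) :
    (s n).1 + ((p : Qbar) ^ (d - 3))⁻¹ ≠ 0 := by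
  intro h
  have := key_rel hs n
  rw [h, mul_zero] at this
  exact pow_ne_zero d (orbit_y_ne hd hp hx₀ hs n) this.symm

/-- consolidated hypotheses on t -/
lemma t_facts {d : ℕ} {t : ℝ} (ht : (5 ≤ d ∧ 1 ≤ t) ∨ (d = 4 ∧ (1 + Real.sqrt 3) / 2 ≤ t)) :
    1 ≤ t ∧ (d = 4 → 1 + 1/(2*t) ≤ t) := by
  have s3 : Real.sqrt 3 ^ 2 = 3 := Real.sq_sqrt (by norm_num)
  have s3' : (1:ℝ) ≤ Real.sqrt 3 := by nlinarith [Real.sqrt_nonneg 3]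
  rcases ht with ⟨hd5, ht1⟩ | ⟨hd4, ht4⟩
  · exact ⟨ht1, fun h => by omega⟩
  · have ht1 : 1 ≤ t := by nlinarith
    refine ⟨ht1, fun _ => ?_⟩
    have ht0 : 0 < t := by linarith
    rw [← sub_nonneg]
    have he : t - (1 + 1/(2*t)) = (2*t^2 - 2*t - 1)/(2*t) := by
      field_simp; ring
    rw [he]
    apply div_nonneg _ (by linarith)
    nlinarith [Real.sqrt_nonneg 3]

/-- real one-step lemma, with `θ` abstract satisfying `θ * t = 1/2` -/
lemma real_step (d : ℕ) (hd : 4 ≤ d) {t θ X Y B Y' : ℝ}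
    (ht : 1 ≤ t) (hθ0 : 0 < θ) (hθt : θ * t = 1/2)
    (htd : d = 4 → 1 + θ ≤ t)
    (hX : t ≤ X) (hY : (1 + θ) * X ≤ Y)
    (hB : 0 < B) (hBle : B ≤ X + 1/2)
    (heq : Y' ^ 2 * B = Y ^ d) (hY' : 0 ≤ Y') :
    (1 + θ) * Y ≤ Y' ∧ Y ^ (d-1) ≤ Y' ^ 2 := by
  obtain ⟨m, rfl⟩ : ∃ m, d = m + 4 := ⟨d - 4, by omega⟩
  have ht0 : 0 < t := by linarith
  have hX1 : 1 ≤ X := le_trans ht hX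
  have hX0 : 0 < X := by linarith
  have hY0 : 0 < Y := lt_of_lt_of_le (by positivity) hY
  have hB1 : B ≤ (1+θ) * X := by
    have h12 : 1/2 ≤ θ * X := by
      rw [← hθt]; exact mul_le_mul_of_nonneg_left hX hθ0.le
    nlinarith
  have hBY : B ≤ Y := le_trans hB1 hY
  have h2 : (1+θ)^3 * X ≤ Y ^ (m+2) := by
    have base : ((1+θ) * X) ^ (m+2) ≤ Y ^ (m+2) := by
      apply pow_le_pow_left₀ (by positivity) hY
    refine le_trans ?_ base
    rcases Nat.eq_zero_or_pos m with hm | hm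
    · subst hm
      have htθ : 1 + θ ≤ t := htd rfl
      calc (1+θ)^3 * X = ((1+θ)^2 * X) * (1+θ) := by ring
        _ ≤ ((1+θ)^2 * X) * t := mul_le_mul_of_nonneg_left htθ (by positivity)
        _ ≤ ((1+θ)^2 * X) * X := mul_le_mul_of_nonneg_left hX (by positivity)
        _ = ((1+θ) * X)^(0+2) := by ring
    · have e2 : (1+θ)^3 ≤ (1+θ)^(m+2) := pow_le_pow_right₀ (by linarith) (by omega)
      have e3 : X ≤ X^(m+2) := le_self_pow₀ hX1 (by omega)
      calc (1+θ)^3 * X ≤ (1+θ)^(m+2) * X := mul_le_mul_of_nonneg_right e2 hX0.le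
        _ ≤ (1+θ)^(m+2) * X^(m+2) := mul_le_mul_of_nonneg_left e3 (by positivity)
        _ = ((1+θ) * X)^(m+2) := (mul_pow _ _ _).symm
  have hsq : ((1+θ) * Y)^2 ≤ Y'^2 := by
    have hYsq : ((1+θ)*Y)^2 * B ≤ Y ^ (m+4) := by
      calc ((1+θ)*Y)^2 * B ≤ ((1+θ)*Y)^2 * ((1+θ)*X) :=
            mul_le_mul_of_nonneg_left hB1 (sq_nonneg _)
        _ = ((1+θ)^3 * X) * Y^2 := by ring
        _ ≤ Y^(m+2) * Y^2 := mul_le_mul_of_nonneg_right h2 (by positivity)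
        _ = Y^(m+4) := by ring
    rw [← heq] at hYsq
    exact le_of_mul_le_mul_right hYsq hB
  constructor
  · have := Real.sqrt_le_sqrt hsq
    rwa [Real.sqrt_sq (by positivity), Real.sqrt_sq hY'] at this
  · have h3 : Y ^ (m+3) * B ≤ Y ^ (m+4) := by
      calc Y^(m+3) * B ≤ Y^(m+3) * Y := mul_le_mul_of_nonneg_left hBY (by positivity)
        _ = Y^(m+4) := by ring
    rw [← heq] at h3
    have h4 := le_of_mul_le_mul_right h3 hB
    simpa using h4

/-- the image of the key relation under an embedding `ψ`, in absolute values. -/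
lemma abs_key_rel (hs : IsBackwardOrbit d p x₀ s) (ψ : Qbar →+* ℂ) (n : ℕ) :
    (Complex.abs (ψ (s (n+1)).2))^2 * Complex.abs (ψ (s n).1 + ((p:ℂ) ^ (d-3))⁻¹)
      = (Complex.abs (ψ (s n).2))^d := by
  have := congrArg ψ (key_rel hs n)
  rw [map_mul, map_pow, map_add, map_inv₀, map_pow, map_natCast, map_pow] at this
  calc (Complex.abs (ψ (s (n+1)).2))^2 * Complex.abs (ψ (s n).1 + ((p:ℂ) ^ (d-3))⁻¹)
      = Complex.abs ((ψ (s (n+1)).2)^2 * (ψ (s n).1 + ((p:ℂ) ^ (d-3))⁻¹)) := by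
        rw [map_mul, map_pow]
    _ = Complex.abs ((ψ (s n).2)^d) := by rw [this]
    _ = (Complex.abs (ψ (s n).2))^d := map_pow _ _ _

lemma abs_c_le (hd : 4 ≤ d) (hp : p.Prime) :
    Complex.abs (((p:ℂ) ^ (d-3))⁻¹) ≤ 1/2 := by
  rw [map_inv₀, map_pow, Complex.abs_natCast]
  rw [inv_le_comm₀ (pow_pos (by exact_mod_cast hp.pos) _) (by norm_num)]
  have h2 : (2:ℝ) ≤ (p:ℝ) := by exact_mod_cast hp.two_le
  calc (1/2 : ℝ)⁻¹ = 2 := by norm_num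
    _ ≤ (p:ℝ) := h2
    _ = (p:ℝ)^1 := (pow_one _).symm
    _ ≤ (p:ℝ)^(d-3) := pow_le_pow_right₀ (by linarith) (by omega)

/-- main escape invariant along the backward orbit. -/
lemma escape (hd : 4 ≤ d) (hp : p.Prime)
    (hx₀ : x₀ ^ (d - 2) - x₀ - ((p : Qbar) ^ (d - 3))⁻¹ = 0)
    (hs : IsBackwardOrbit d p x₀ s)
    {t : ℝ} (ht1 : 1 ≤ t) (htd : d = 4 → 1 + 1/(2*t) ≤ t)
    (n₀ : ℕ) (ψ : Qbar →+* ℂ)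
    (hψx : t ≤ Complex.abs (ψ (s n₀).1))
    (hψy : (1 + 1/(2*t)) * Complex.abs (ψ (s n₀).1) ≤ Complex.abs (ψ (s n₀).2)) :
    ∀ k : ℕ,
      (t ≤ Complex.abs (ψ (s (n₀+k)).1)) ∧
      ((1 + 1/(2*t)) * Complex.abs (ψ (s (n₀+k)).1) ≤ Complex.abs (ψ (s (n₀+k)).2)) ∧
      (3/2 ≤ Complex.abs (ψ (s (n₀+k)).2)) ∧
      ((((d:ℝ)-1)/2)^k * Real.log (3/2) ≤ Real.log (Complex.abs (ψ (s (n₀+k)).2))) := by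
  have ht0 : 0 < t := by linarith
  set θ : ℝ := 1/(2*t) with hθdef
  have hθ0 : 0 < θ := by positivity
  have hθt : θ * t = 1/2 := by rw [hθdef]; field_simp
  have hθ2 : θ ≤ 1/2 := by
    rw [hθdef]
    rw [div_le_div_iff₀ (by linarith) (by norm_num)]
    linarith
  have base32 : ∀ n, t ≤ Complex.abs (ψ (s n).1) →
      (1 + θ) * Complex.abs (ψ (s n).1) ≤ Complex.abs (ψ (s n).2) →
      3/2 ≤ Complex.abs (ψ (s n).2) := by
    intro n hX hY
    have : (1+θ) * t ≤ (1+θ) * Complex.abs (ψ (s n).1) :=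
      mul_le_mul_of_nonneg_left hX (by positivity)
    nlinarith
  have step : ∀ n, t ≤ Complex.abs (ψ (s n).1) →
      (1 + θ) * Complex.abs (ψ (s n).1) ≤ Complex.abs (ψ (s n).2) →
      (t ≤ Complex.abs (ψ (s (n+1)).1)) ∧
      ((1 + θ) * Complex.abs (ψ (s (n+1)).1) ≤ Complex.abs (ψ (s (n+1)).2)) ∧
      ((Complex.abs (ψ (s n).2)) ^ (d-1) ≤ (Complex.abs (ψ (s (n+1)).2))^2) := by
    intro n hX hY
    have hx1 : (s (n+1)).1 = (s n).2 := x_succ hs n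
    have hX' : Complex.abs (ψ (s (n+1)).1) = Complex.abs (ψ (s n).2) := by rw [hx1]
    have heq := abs_key_rel hs ψ n
    have hBpos : 0 < Complex.abs (ψ (s n).1 + ((p:ℂ) ^ (d-3))⁻¹) := by
      rw [Complex.abs.pos_iff]
      intro hz
      apply x_plus_c_ne hd hp hx₀ hs n
      apply (map_eq_zero_iff ψ (RingHom.injective ψ)).mp
      rw [map_add, map_inv₀, map_pow, map_natCast]
      exact hz
    have hBle : Complex.abs (ψ (s n).1 + ((p:ℂ) ^ (d-3))⁻¹)
        ≤ Complex.abs (ψ (s n).1) + 1/2 := by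
      calc Complex.abs (ψ (s n).1 + ((p:ℂ) ^ (d-3))⁻¹)
          ≤ Complex.abs (ψ (s n).1) + Complex.abs (((p:ℂ) ^ (d-3))⁻¹) :=
            Complex.abs.add_le _ _
        _ ≤ Complex.abs (ψ (s n).1) + 1/2 := by linarith [abs_c_le (p := p) hd hp]
    obtain ⟨hstep1, hstep2⟩ := real_step d hd ht1 hθ0 hθt
      (fun h4 => by simpa [hθdef] using htd h4) hX hY hBpos hBle heq (Complex.abs.nonneg _)
    refine ⟨?_, ?_, hstep2⟩
    · rw [hX']
      have : (1+θ) * t ≤ (1+θ) * Complex.abs (ψ (s n).1) :=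
        mul_le_mul_of_nonneg_left hX (by positivity)
      nlinarith
    · rw [hX']; exact hstep1
  intro k
  induction k with
  | zero =>
    refine ⟨hψx, hψy, base32 n₀ hψx hψy, ?_⟩
    simp only [pow_zero, one_mul, Nat.add_zero]
    apply Real.log_le_log (by norm_num)
    exact base32 n₀ hψx hψy
  | succ k ih =>
    obtain ⟨ih1, ih2, ih3, ih4⟩ := ih
    obtain ⟨h1, h2, h3⟩ := step (n₀+k) ih1 ih2
    have h32 : 3/2 ≤ Complex.abs (ψ (s (n₀+k+1)).2) := base32 _ h1 h2
    refine ⟨by rw [show n₀ + (k+1) = n₀+k+1 by ring]; exact h1,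
      by rw [show n₀ + (k+1) = n₀+k+1 by ring]; exact h2,
      by rw [show n₀ + (k+1) = n₀+k+1 by ring]; exact h32, ?_⟩
    rw [show n₀ + (k+1) = n₀+k+1 by ring]
    have hY0 : (1:ℝ) ≤ Complex.abs (ψ (s (n₀+k)).2) := by linarith
    have hY'0 : (0:ℝ) < Complex.abs (ψ (s (n₀+k+1)).2) := by linarith
    have hlog : ((d:ℝ)-1) * Real.log (Complex.abs (ψ (s (n₀+k)).2))
        ≤ 2 * Real.log (Complex.abs (ψ (s (n₀+k+1)).2)) := by
      have := Real.log_le_log (by positivity) h3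
      rw [Real.log_pow, Real.log_pow] at this
      have hcast : ((d-1 : ℕ) : ℝ) = (d:ℝ) - 1 := by
        have : (1:ℕ) ≤ d := by omega
        push_cast [Nat.cast_sub this]
        ring
      rw [hcast] at this
      exact_mod_cast this
    have hlogY : 0 ≤ Real.log (Complex.abs (ψ (s (n₀+k)).2)) :=
      Real.log_nonneg hY0
    have hd1 : (0:ℝ) ≤ ((d:ℝ)-1)/2 := by
      have : (4:ℝ) ≤ (d:ℝ) := by exact_mod_cast hd
      linarith
    calc (((d:ℝ)-1)/2)^(k+1) * Real.log (3/2)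
        = (((d:ℝ)-1)/2) * ((((d:ℝ)-1)/2)^k * Real.log (3/2)) := by ring
      _ ≤ (((d:ℝ)-1)/2) * Real.log (Complex.abs (ψ (s (n₀+k)).2)) :=
          mul_le_mul_of_nonneg_left ih4 hd1
      _ ≤ Real.log (Complex.abs (ψ (s (n₀+k+1)).2)) := by linarith

lemma two_monomials (σ : Qbar →+* ℂ) {q : MvPolynomial (Fin 2) Qbar} (hq0 : q ≠ 0)
    {a b : Qbar} (ha : a ≠ 0) (hb : b ≠ 0)
    (hz : MvPolynomial.eval ![a, b] q = 0) :
    ∃ e ∈ q.support, ∃ f ∈ q.support, e ≠ f ∧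
      |((e 0 : ℝ) - (f 0 : ℝ)) * Real.log (Complex.abs (σ a))
        + ((e 1 : ℝ) - (f 1 : ℝ)) * Real.log (Complex.abs (σ b))|
      ≤ Real.log q.support.card
        + |Real.log (Complex.abs (σ (q.coeff e))) - Real.log (Complex.abs (σ (q.coeff f)))| := by
  classical
  set α := Complex.abs (σ a) with hα
  set β := Complex.abs (σ b) with hβ
  have hα0 : 0 < α := by
    rw [hα, Complex.abs.pos_iff]; simpa using (map_ne_zero_iff σ (RingHom.injective σ)).mpr ha
  have hβ0 : 0 < β := by
    rw [hβ, Complex.abs.pos_iff]; simpa using (map_ne_zero_iff σ (RingHom.injective σ)).mpr hb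
  have hsum : ∑ e ∈ q.support, σ (q.coeff e) * (σ a) ^ (e 0) * (σ b) ^ (e 1) = 0 := by
    have h0 : ∑ e ∈ q.support, q.coeff e * (a ^ (e 0) * b ^ (e 1)) = 0 := by
      rw [MvPolynomial.eval_eq'] at hz
      rw [← hz]
      apply Finset.sum_congr rfl
      intro e _
      rw [Fin.prod_univ_two]
      simp
    have h1 := congrArg σ h0
    rw [map_sum, map_zero] at h1
    rw [← h1]
    apply Finset.sum_congr rfl
    intro e _
    rw [map_mul, map_mul, map_pow, map_pow]
    ring
  set A : (Fin 2 →₀ ℕ) → ℝ := fun e => Complex.abs (σ (q.coeff e)) * α ^ (e 0) * β ^ (e 1) with hA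
  have habs : ∀ e, Complex.abs (σ (q.coeff e) * (σ a) ^ (e 0) * (σ b) ^ (e 1)) = A e := by
    intro e; rw [hA]; simp [map_mul, map_pow, hα, hβ]
  have hApos : ∀ e ∈ q.support, 0 < A e := by
    intro e he
    have hc : q.coeff e ≠ 0 := MvPolynomial.mem_support_iff.mp he
    have : σ (q.coeff e) ≠ 0 := (map_ne_zero_iff σ (RingHom.injective σ)).mpr hc
    have : 0 < Complex.abs (σ (q.coeff e)) := Complex.abs.pos this
    positivity
  have hne : q.support.Nonempty := MvPolynomial.support_nonempty.mpr hq0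
  obtain ⟨estar, hestar, hmax⟩ := Finset.exists_max_image q.support A hne
  have hT2 : 2 ≤ q.support.card := by
    by_contra h
    have h1 : q.support.card = 1 := by
      have := Finset.card_pos.mpr hne; omega
    obtain ⟨e, he⟩ := Finset.card_eq_one.mp h1
    rw [he, Finset.sum_singleton] at hsum
    have : A e = 0 := by rw [← habs, hsum, map_zero]
    have heq : e ∈ q.support := by rw [he]; exact Finset.mem_singleton_self e
    exact absurd this (ne_of_gt (hApos e heq))
  have hkey : A estar ≤ ∑ e ∈ q.support.erase estar, A e := by
    have h1 : σ (q.coeff estar) * (σ a) ^ (estar 0) * (σ b) ^ (estar 1)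
        = - ∑ e ∈ q.support.erase estar, σ (q.coeff e) * (σ a) ^ (e 0) * (σ b) ^ (e 1) := by
      have := Finset.add_sum_erase q.support
        (fun e => σ (q.coeff e) * (σ a) ^ (e 0) * (σ b) ^ (e 1)) hestar
      rw [hsum] at this
      linear_combination this
    calc A estar = Complex.abs (σ (q.coeff estar) * (σ a) ^ (estar 0) * (σ b) ^ (estar 1)) :=
          (habs estar).symm
      _ = Complex.abs (∑ e ∈ q.support.erase estar,
            σ (q.coeff e) * (σ a) ^ (e 0) * (σ b) ^ (e 1)) := by rw [h1, map_neg_eq_map]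
      _ ≤ ∑ e ∈ q.support.erase estar,
            Complex.abs (σ (q.coeff e) * (σ a) ^ (e 0) * (σ b) ^ (e 1)) :=
          Complex.abs.sum_le _ _
      _ = ∑ e ∈ q.support.erase estar, A e := by
          apply Finset.sum_congr rfl; intro e _; exact habs e
  have herasene : (q.support.erase estar).Nonempty := by
    rw [← Finset.card_pos, Finset.card_erase_of_mem hestar]; omega
  obtain ⟨fstar, hfstar, hmax2⟩ := Finset.exists_max_image (q.support.erase estar) A herasene
  have hfmem : fstar ∈ q.support := Finset.mem_of_mem_erase hfstar
  have hfne : fstar ≠ estar := Finset.ne_of_mem_erase hfstar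
  have hbound : A estar ≤ (q.support.card : ℝ) * A fstar := by
    have h2 : ∑ e ∈ q.support.erase estar, A e
        ≤ (q.support.erase estar).card • A fstar :=
      Finset.sum_le_card_nsmul _ _ _ (fun e he => hmax2 e he)
    rw [nsmul_eq_mul] at h2
    have hc : ((q.support.erase estar).card : ℝ) ≤ (q.support.card : ℝ) := by
      exact_mod_cast Finset.card_le_card (Finset.erase_subset _ _)
    have hAf : 0 < A fstar := hApos _ hfmem
    calc A estar ≤ ((q.support.erase estar).card : ℝ) * A fstar := le_trans hkey h2
      _ ≤ (q.support.card : ℝ) * A fstar := mul_le_mul_of_nonneg_right hc hAf.le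
  have hAe : 0 < A estar := hApos _ hestar
  have hAf : 0 < A fstar := hApos _ hfmem
  have hlog1 : Real.log (A fstar) ≤ Real.log (A estar) := Real.log_le_log hAf (hmax _ hfmem)
  have hlog2 : Real.log (A estar) ≤ Real.log (q.support.card : ℝ) + Real.log (A fstar) := by
    have := Real.log_le_log hAe hbound
    rwa [Real.log_mul (by positivity) hAf.ne'] at this
  have hexp : ∀ e ∈ q.support, Real.log (A e)
      = Real.log (Complex.abs (σ (q.coeff e))) + (e 0 : ℝ) * Real.log α + (e 1 : ℝ) * Real.log β := by
    intro e he
    have hc : (0:ℝ) < Complex.abs (σ (q.coeff e)) :=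
      Complex.abs.pos ((map_ne_zero_iff σ (RingHom.injective σ)).mpr (MvPolynomial.mem_support_iff.mp he))
    rw [hA]
    rw [Real.log_mul (by positivity) (by positivity),
        Real.log_mul hc.ne' (by positivity), Real.log_pow, Real.log_pow]
  refine ⟨estar, hestar, fstar, hfmem, hfne.symm, ?_⟩
  have he1 := hexp estar hestar
  have he2 := hexp fstar hfmem
  set ce := Real.log (Complex.abs (σ (q.coeff estar)))
  set cf := Real.log (Complex.abs (σ (q.coeff fstar)))
  have hTlog : 0 ≤ Real.log (q.support.card : ℝ) := by
    apply Real.log_nonneg; exact_mod_cast Nat.one_le_iff_ne_zero.mpr (by omega)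
  have hD : ((estar 0 : ℝ) - (fstar 0 : ℝ)) * Real.log α + ((estar 1 : ℝ) - (fstar 1 : ℝ)) * Real.log β
      = (Real.log (A estar) - Real.log (A fstar)) - (ce - cf) := by
    rw [he1, he2]; ring
  rw [hD]
  have h5 : |Real.log (A estar) - Real.log (A fstar)| ≤ Real.log (q.support.card : ℝ) := by
    rw [abs_of_nonneg (by linarith)]; linarith
  have h6 : |(Real.log (A estar) - Real.log (A fstar)) - (ce - cf)|
      ≤ |Real.log (A estar) - Real.log (A fstar)| + |ce - cf| := by
    calc |(Real.log (A estar) - Real.log (A fstar)) - (ce - cf)|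
        = |(Real.log (A estar) - Real.log (A fstar)) + (cf - ce)| := by ring_nf
      _ ≤ |Real.log (A estar) - Real.log (A fstar)| + |cf - ce| := abs_add_le _ _
      _ = |Real.log (A estar) - Real.log (A fstar)| + |ce - cf| := by rw [abs_sub_comm cf ce]
  linarith

lemma notsq (d : ℕ) (hd : 4 ≤ d) : ¬ IsSquare (d^2 - 8) := by
  rintro ⟨k, hk⟩
  have h8 : 8 ≤ d^2 := by nlinarith
  have h4 : d^2 = k*k + 8 := by omega
  have hd2 : d^2 = d*d := sq d
  have hkd : k < d := by nlinarith
  have h3 : (k+1)*(k+1) ≤ d*d := Nat.mul_le_mul hkd hkd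
  have hk3 : k ≤ 3 := by nlinarith
  have hd4 : d ≤ 4 := by nlinarith
  have hd4' : d = 4 := by omega
  subst hd4'
  interval_cases k <;> omega

lemma lam_irrational (d : ℕ) (hd : 4 ≤ d) :
    Irrational (((d:ℝ) + Real.sqrt ((d:ℝ)^2 - 8))/4) := by
  have h8 : 8 ≤ d^2 := by nlinarith
  have hcast : ((d^2 - 8 : ℕ) : ℝ) = (d:ℝ)^2 - 8 := by
    rw [Nat.cast_sub h8]; push_cast; ring
  have hirr : Irrational (Real.sqrt ((d:ℝ)^2 - 8)) := by
    rw [← hcast]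
    exact irrational_sqrt_natCast_iff.mpr (notsq d hd)
  have h1 : Irrational ((d:ℝ) + Real.sqrt ((d:ℝ)^2 - 8)) := hirr.natCast_add d
  have h2 := h1.div_natCast (by norm_num : (4:ℕ) ≠ 0)
  simpa using h2

/-- facts about `λ` and `μ` -/
lemma lam_mu_facts (d : ℕ) (hd : 4 ≤ d) :
    (((d:ℝ) + Real.sqrt ((d:ℝ)^2 - 8))/4) * (((d:ℝ) - Real.sqrt ((d:ℝ)^2 - 8))/4) = 1/2 ∧
    (((d:ℝ) + Real.sqrt ((d:ℝ)^2 - 8))/4) + (((d:ℝ) - Real.sqrt ((d:ℝ)^2 - 8))/4) = (d:ℝ)/2 ∧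
    0 ≤ (((d:ℝ) - Real.sqrt ((d:ℝ)^2 - 8))/4) ∧
    (((d:ℝ) - Real.sqrt ((d:ℝ)^2 - 8))/4) ≤ 1/2 := by
  have hd4 : (4:ℝ) ≤ (d:ℝ) := by exact_mod_cast hd
  have h80 : (0:ℝ) ≤ (d:ℝ)^2 - 8 := by nlinarith
  have hsq : Real.sqrt ((d:ℝ)^2 - 8) ^ 2 = (d:ℝ)^2 - 8 := Real.sq_sqrt h80
  have hnn : 0 ≤ Real.sqrt ((d:ℝ)^2 - 8) := Real.sqrt_nonneg _
  have hlt : Real.sqrt ((d:ℝ)^2 - 8) ≤ (d:ℝ) := by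
    nlinarith
  have hge : (d:ℝ) - 2 ≤ Real.sqrt ((d:ℝ)^2 - 8) := by
    have h := Real.sqrt_le_sqrt (show ((d:ℝ)-2)^2 ≤ (d:ℝ)^2 - 8 by nlinarith)
    rwa [Real.sqrt_sq (by linarith)] at h
  refine ⟨by nlinarith, by ring, by linarith, by linarith⟩

lemma part_b (hd : 4 ≤ d) (hp : p.Prime)
    (hx₀ : x₀ ^ (d - 2) - x₀ - ((p : Qbar) ^ (d - 3))⁻¹ = 0)
    (hs : IsBackwardOrbit d p x₀ s)
    {t : ℝ} (ht : (5 ≤ d ∧ 1 ≤ t) ∨ (d = 4 ∧ (1 + Real.sqrt 3) / 2 ≤ t))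
    (n₀ : ℕ) (σ : Qbar →+* ℂ)
    (hσy : (1 + 1 / (2 * t)) * Complex.abs (σ (s n₀).1) ≤ Complex.abs (σ (s n₀).2))
    (hσx : t ≤ Complex.abs (σ (s n₀).1)) :
    ∀ q : MvPolynomial (Fin 2) Qbar,
      (∀ n : ℕ, MvPolynomial.eval ![(s n).1, (s n).2] q = 0) → q = 0 := by
  classical
  intro q hq
  by_contra hq0
  obtain ⟨ht1, htd⟩ := t_facts ht
  have esc := escape hd hp hx₀ hs ht1 htd n₀ σ hσx hσy
  set v : ℕ → ℝ := fun n => Real.log (Complex.abs (σ (s n).2)) with hv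
  have hY32 : ∀ k, (3/2:ℝ) ≤ Complex.abs (σ (s (n₀+k)).2) := fun k => (esc k).2.2.1
  have hlog32 : (0:ℝ) < Real.log (3/2) := Real.log_pos (by norm_num)
  have hv32 : ∀ k, Real.log (3/2) ≤ v (n₀+k) := fun k =>
    Real.log_le_log (by norm_num) (hY32 k)
  have hv0 : ∀ k, 0 ≤ v (n₀+k) := fun k => le_trans hlog32.le (hv32 k)
  have hgrow : ∀ k, (3/2:ℝ)^k * Real.log (3/2) ≤ v (n₀+k) := by
    intro k
    have h1 := (esc k).2.2.2
    have h2 : ((3:ℝ)/2)^k ≤ (((d:ℝ)-1)/2)^k := by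
      apply pow_le_pow_left₀ (by norm_num)
      have : (4:ℝ) ≤ (d:ℝ) := by exact_mod_cast hd
      linarith
    calc (3/2:ℝ)^k * Real.log (3/2) ≤ (((d:ℝ)-1)/2)^k * Real.log (3/2) :=
          mul_le_mul_of_nonneg_right h2 hlog32.le
      _ ≤ v (n₀+k) := h1
  have hE : ∀ k, |2 * v (n₀+k+2) - ((d:ℝ) * v (n₀+k+1) - v (n₀+k))| ≤ Real.log 2 := by
    intro k
    have heq := abs_key_rel hs σ (n₀+k+1)
    set X : ℝ := Complex.abs (σ (s (n₀+k+1)).1) with hX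
    set B : ℝ := Complex.abs (σ (s (n₀+k+1)).1 + ((p:ℂ) ^ (d-3))⁻¹) with hB
    have hXv : X = Complex.abs (σ (s (n₀+k)).2) := by rw [hX, x_succ hs (n₀+k)]
    have hX32 : (3/2:ℝ) ≤ X := by rw [hXv]; exact hY32 k
    have hBle : B ≤ X + 1/2 := by
      calc B ≤ Complex.abs (σ (s (n₀+k+1)).1) + Complex.abs (((p:ℂ) ^ (d-3))⁻¹) :=
            Complex.abs.add_le _ _
        _ ≤ X + 1/2 := by rw [← hX]; linarith [abs_c_le (d := d) (p := p) hd hp]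
    have hBge : X - 1/2 ≤ B := by
      have h1 : X ≤ B + Complex.abs (((p:ℂ) ^ (d-3))⁻¹) := by
        calc X = Complex.abs ((σ (s (n₀+k+1)).1 + ((p:ℂ) ^ (d-3))⁻¹) + (-((p:ℂ) ^ (d-3))⁻¹)) := by
              rw [hX]; ring_nf
          _ ≤ B + Complex.abs (-((p:ℂ) ^ (d-3))⁻¹) := Complex.abs.add_le _ _
          _ = B + Complex.abs (((p:ℂ) ^ (d-3))⁻¹) := by rw [map_neg_eq_map]
      linarith [abs_c_le (d := d) (p := p) hd hp]
    have hBpos : (0:ℝ) < B := by linarith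
    have hY1 : (3/2:ℝ) ≤ Complex.abs (σ (s (n₀+k+1)).2) := by
      have := hY32 (k+1); rwa [show n₀+(k+1) = n₀+k+1 by omega] at this
    have hY2 : (3/2:ℝ) ≤ Complex.abs (σ (s (n₀+k+2)).2) := by
      have := hY32 (k+2); rwa [show n₀+(k+2) = n₀+k+2 by omega] at this
    have hlogeq : 2 * v (n₀+k+2) + Real.log B = (d:ℝ) * v (n₀+k+1) := by
      have h1 := congrArg Real.log heq
      rw [Real.log_mul (by positivity) hBpos.ne', Real.log_pow, Real.log_pow] at h1
      have e2 : n₀+k+1+1 = n₀+k+2 := by omega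
      rw [e2] at h1
      push_cast at h1 ⊢
      rw [hv]
      linarith [h1]
    have hX0 : (0:ℝ) < X := by linarith
    have hup : Real.log B ≤ Real.log 2 + v (n₀+k) := by
      have h1 : B ≤ 2 * X := by linarith
      have h2 := Real.log_le_log hBpos h1
      rw [Real.log_mul (by norm_num) hX0.ne'] at h2
      have : v (n₀+k) = Real.log X := by rw [hv, hXv]
      linarith [this ▸ h2]
    have hdown : v (n₀+k) - Real.log 2 ≤ Real.log B := by
      have h1 : X / 2 ≤ B := by linarith
      have h2 := Real.log_le_log (by positivity) h1
      rw [Real.log_div hX0.ne' (by norm_num)] at h2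
      have : v (n₀+k) = Real.log X := by rw [hv, hXv]
      linarith [this ▸ h2]
    rw [abs_le]
    constructor <;> linarith
  set lam : ℝ := ((d:ℝ) + Real.sqrt ((d:ℝ)^2 - 8))/4 with hlam
  set mu : ℝ := ((d:ℝ) - Real.sqrt ((d:ℝ)^2 - 8))/4 with hmu
  obtain ⟨hlm1, hlm2, hmu0, hmu2⟩ := lam_mu_facts d hd
  set Z : ℝ := max |v (n₀+0+1) - lam * v (n₀+0)| (Real.log 2) with hZ
  have hZ0 : 0 ≤ Z := le_trans (abs_nonneg _) (le_max_left _ _)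
  have hlog2 : (0:ℝ) ≤ Real.log 2 := Real.log_nonneg (by norm_num)
  have hzbound : ∀ k, |v (n₀+k+1) - lam * v (n₀+k)| ≤ Z := by
    intro k
    induction k with
    | zero => exact le_max_left _ _
    | succ k ih =>
      have e1 : n₀+(k+1)+1 = n₀+k+2 := by omega
      have e2 : n₀+(k+1) = n₀+k+1 := by omega
      rw [e1, e2]
      have hiden : v (n₀+k+2) - lam * v (n₀+k+1)
          = mu * (v (n₀+k+1) - lam * v (n₀+k))
            + (2 * v (n₀+k+2) - ((d:ℝ) * v (n₀+k+1) - v (n₀+k)))/2 := by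
        linear_combination (v (n₀+k)) * hlm1 - (v (n₀+k+1)) * hlm2
      rw [hiden]
      calc |mu * (v (n₀+k+1) - lam * v (n₀+k))
            + (2 * v (n₀+k+2) - ((d:ℝ) * v (n₀+k+1) - v (n₀+k)))/2|
          ≤ |mu * (v (n₀+k+1) - lam * v (n₀+k))|
            + |(2 * v (n₀+k+2) - ((d:ℝ) * v (n₀+k+1) - v (n₀+k)))/2| := abs_add_le _ _
        _ ≤ mu * Z + Real.log 2 / 2 := by
            have h1 : |mu * (v (n₀+k+1) - lam * v (n₀+k))| = mu * |v (n₀+k+1) - lam * v (n₀+k)| := by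
              rw [abs_mul, abs_of_nonneg hmu0]
            have h2 : |(2 * v (n₀+k+2) - ((d:ℝ) * v (n₀+k+1) - v (n₀+k)))/2|
                = |2 * v (n₀+k+2) - ((d:ℝ) * v (n₀+k+1) - v (n₀+k))|/2 := by
              rw [abs_div]; norm_num
            rw [h1, h2]
            have h3 := hE k
            have h4 : mu * |v (n₀+k+1) - lam * v (n₀+k)| ≤ mu * Z :=
              mul_le_mul_of_nonneg_left ih hmu0
            linarith
        _ ≤ Z := by
            have hZl2 : Real.log 2 ≤ Z := le_max_right _ _
            nlinarith
  set c : (Fin 2 →₀ ℕ) → ℝ := fun e => Real.log (Complex.abs (σ (q.coeff e))) with hc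
  set P : Finset ((Fin 2 →₀ ℕ) × (Fin 2 →₀ ℕ)) :=
    (q.support ×ˢ q.support).filter (fun pr => pr.1 ≠ pr.2) with hP
  set g : (Fin 2 →₀ ℕ) × (Fin 2 →₀ ℕ) → ℝ :=
    fun pr => |((pr.1 0 : ℝ) - (pr.2 0 : ℝ)) + ((pr.1 1 : ℝ) - (pr.2 1 : ℝ)) * lam| with hg
  have hgpos : ∀ pr ∈ P, 0 < g pr := by
    rintro ⟨e, f⟩ hpr
    rw [hP, Finset.mem_filter] at hpr
    obtain ⟨-, hef⟩ := hpr
    simp only at hef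
    rcases eq_or_ne (e 1) (f 1) with h1 | h1
    · have h0 : e 0 ≠ f 0 := by
        intro h0
        apply hef
        ext i
        fin_cases i
        · exact h0
        · exact h1
      have hcast : ((e 1 : ℝ)) = ((f 1 : ℝ)) := by exact_mod_cast h1
      have hrw : ((e 0 : ℝ) - (f 0 : ℝ)) + ((e 1 : ℝ) - (f 1 : ℝ)) * lam = (e 0 : ℝ) - (f 0 : ℝ) := by
        rw [hcast]; ring
      rw [hg]
      simp only
      rw [hrw]
      exact abs_pos.mpr (sub_ne_zero.mpr (by exact_mod_cast h0))
    · rw [hg]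
      simp only
      apply abs_pos.mpr
      intro heq0
      have hne : ((e 1 : ℝ) - (f 1 : ℝ)) ≠ 0 := by
        apply sub_ne_zero.mpr
        exact_mod_cast h1
      have hlamval : lam = (((f 0 : ℝ)) - ((e 0 : ℝ)))/(((e 1 : ℝ)) - ((f 1 : ℝ))) := by
        field_simp
        linarith
      set qq : ℚ := (((f 0 : ℚ)) - ((e 0 : ℚ)))/(((e 1 : ℚ)) - ((f 1 : ℚ))) with hqq
      apply lam_irrational d hd
      refine ⟨qq, ?_⟩
      rw [hqq]
      push_cast
      rw [← hlam, hlamval]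
  have hyne : ∀ n, (s n).2 ≠ 0 := orbit_y_ne hd hp hx₀ hs
  have hxne : ∀ n, (s (n+1)).1 ≠ 0 := fun n => by rw [x_succ hs n]; exact hyne n
  have hPne : P.Nonempty := by
    obtain ⟨e, he, f, hf, hef, -⟩ :=
      two_monomials σ hq0 (hxne n₀) (hyne (n₀+1)) (hq (n₀+1))
    exact ⟨(e, f), by rw [hP, Finset.mem_filter]; exact ⟨Finset.mem_product.mpr ⟨he, hf⟩, hef⟩⟩
  obtain ⟨pmin, hpmin, hmin⟩ := Finset.exists_min_image P g hPne
  set δ : ℝ := g pmin with hδ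
  have hδ0 : 0 < δ := hgpos pmin hpmin
  obtain ⟨pJ, hpJ, hJmax⟩ := Finset.exists_max_image P (fun pr => |(pr.1 1 : ℝ) - (pr.2 1 : ℝ)|) hPne
  set J : ℝ := |(pJ.1 1 : ℝ) - (pJ.2 1 : ℝ)| with hJ
  have hJ0 : 0 ≤ J := abs_nonneg _
  obtain ⟨pC, hpC, hCmax⟩ := Finset.exists_max_image P (fun pr => |c pr.1 - c pr.2|) hPne
  set Cm : ℝ := |c pC.1 - c pC.2| with hCm
  have hCm0 : 0 ≤ Cm := abs_nonneg _
  set W : ℝ := (Real.log (q.support.card : ℝ) + Cm + J * Z)/δ with hW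
  obtain ⟨k, hk⟩ := pow_unbounded_of_one_lt (W / Real.log (3/2)) (by norm_num : (1:ℝ) < 3/2)
  have hku : W < v (n₀+k) := by
    have h1 : W / Real.log (3/2) < (3/2:ℝ)^k := hk
    have h2 : W < (3/2:ℝ)^k * Real.log (3/2) := by
      rw [div_lt_iff₀ hlog32] at h1
      linarith
    linarith [hgrow k]
  obtain ⟨e, he, f, hf, hef, hbound⟩ :=
    two_monomials σ hq0 (hxne (n₀+k)) (hyne (n₀+k+1)) (hq (n₀+k+1))
  have hmemP : (e, f) ∈ P := by
    rw [hP, Finset.mem_filter]; exact ⟨Finset.mem_product.mpr ⟨he, hf⟩, hef⟩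
  rw [x_succ hs (n₀+k)] at hbound
  have hbound' : |((e 0 : ℝ) - (f 0 : ℝ)) * v (n₀+k) + ((e 1 : ℝ) - (f 1 : ℝ)) * v (n₀+k+1)|
      ≤ Real.log (q.support.card : ℝ) + |c e - c f| := hbound
  have hlow : g (e, f) * v (n₀+k)
      ≤ |((e 0 : ℝ) - (f 0 : ℝ)) * v (n₀+k) + ((e 1 : ℝ) - (f 1 : ℝ)) * v (n₀+k+1)|
        + |(e 1 : ℝ) - (f 1 : ℝ)| * Z := by
    have h1 : (((e 0 : ℝ) - (f 0 : ℝ)) + ((e 1 : ℝ) - (f 1 : ℝ)) * lam) * v (n₀+k)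
        = (((e 0 : ℝ) - (f 0 : ℝ)) * v (n₀+k) + ((e 1 : ℝ) - (f 1 : ℝ)) * v (n₀+k+1))
          - ((e 1 : ℝ) - (f 1 : ℝ)) * (v (n₀+k+1) - lam * v (n₀+k)) := by ring
    have h2 : g (e, f) * v (n₀+k)
        = |(((e 0 : ℝ) - (f 0 : ℝ)) + ((e 1 : ℝ) - (f 1 : ℝ)) * lam) * v (n₀+k)| := by
      rw [hg]; simp only
      rw [abs_mul, abs_of_nonneg (hv0 k)]
    rw [h2, h1]
    calc |(((e 0 : ℝ) - (f 0 : ℝ)) * v (n₀+k) + ((e 1 : ℝ) - (f 1 : ℝ)) * v (n₀+k+1))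
          - ((e 1 : ℝ) - (f 1 : ℝ)) * (v (n₀+k+1) - lam * v (n₀+k))|
        ≤ |((e 0 : ℝ) - (f 0 : ℝ)) * v (n₀+k) + ((e 1 : ℝ) - (f 1 : ℝ)) * v (n₀+k+1)|
          + |((e 1 : ℝ) - (f 1 : ℝ)) * (v (n₀+k+1) - lam * v (n₀+k))| := by
          have := abs_add_le (((e 0 : ℝ) - (f 0 : ℝ)) * v (n₀+k) + ((e 1 : ℝ) - (f 1 : ℝ)) * v (n₀+k+1))
            (-(((e 1 : ℝ) - (f 1 : ℝ)) * (v (n₀+k+1) - lam * v (n₀+k))))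
          simpa [sub_eq_add_neg] using this
      _ ≤ |((e 0 : ℝ) - (f 0 : ℝ)) * v (n₀+k) + ((e 1 : ℝ) - (f 1 : ℝ)) * v (n₀+k+1)|
          + |(e 1 : ℝ) - (f 1 : ℝ)| * Z := by
          rw [abs_mul]
          have := hzbound k
          have h3 : |(e 1 : ℝ) - (f 1 : ℝ)| * |v (n₀+k+1) - lam * v (n₀+k)|
              ≤ |(e 1 : ℝ) - (f 1 : ℝ)| * Z := mul_le_mul_of_nonneg_left this (abs_nonneg _)
          linarith
  have hδu : δ * v (n₀+k) ≤ g (e, f) * v (n₀+k) :=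
    mul_le_mul_of_nonneg_right (hmin (e, f) hmemP) (hv0 k)
  have hJe : |(e 1 : ℝ) - (f 1 : ℝ)| ≤ J := hJmax (e, f) hmemP
  have hCe : |c e - c f| ≤ Cm := hCmax (e, f) hmemP
  have hWu : Real.log (q.support.card : ℝ) + Cm + J * Z < δ * v (n₀+k) := by
    have := hku
    rw [hW, div_lt_iff₀ hδ0] at this
    linarith
  have hfinal : δ * v (n₀+k) ≤ Real.log (q.support.card : ℝ) + Cm + J * Z := by
    calc δ * v (n₀+k) ≤ g (e, f) * v (n₀+k) := hδu
      _ ≤ |((e 0 : ℝ) - (f 0 : ℝ)) * v (n₀+k) + ((e 1 : ℝ) - (f 1 : ℝ)) * v (n₀+k+1)|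
          + |(e 1 : ℝ) - (f 1 : ℝ)| * Z := hlow
      _ ≤ (Real.log (q.support.card : ℝ) + |c e - c f|) + |(e 1 : ℝ) - (f 1 : ℝ)| * Z := by
          linarith
      _ ≤ Real.log (q.support.card : ℝ) + Cm + J * Z := by
          have h4 : |(e 1 : ℝ) - (f 1 : ℝ)| * Z ≤ J * Z := mul_le_mul_of_nonneg_right hJe hZ0
          linarith
  linarith

lemma counting (F K : IntermediateField ℚ Qbar) [hF : FiniteDimensional ℚ F]
    [hK : FiniteDimensional ℚ K] (σ : Qbar →+* ℂ) :
    ∃ S : Finset (K →+* ℂ),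
      (Module.finrank ℚ K : ℝ) ≤ (S.card : ℝ) * (Module.finrank ℚ F : ℝ) ∧
      ∀ κ ∈ S, ∃ ψ : Qbar →+* ℂ, (∀ a : K, ψ a = κ a) ∧ (∀ a : F, ψ a = σ a) := by
  classical
  set L : IntermediateField ℚ Qbar := F ⊔ K with hL
  haveI hFDL : FiniteDimensional ℚ L := IntermediateField.finiteDimensional_sup F K
  have hFL : F ≤ L := le_sup_left
  have hKL : K ≤ L := le_sup_right
  letI aFL : Algebra F L := (IntermediateField.inclusion hFL).toRingHom.toAlgebra
  letI aKL : Algebra K L := (IntermediateField.inclusion hKL).toRingHom.toAlgebra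
  letI aFC : Algebra F ℂ := (σ.comp (algebraMap F Qbar)).toAlgebra
  haveI tFL : IsScalarTower ℚ F L :=
    IsScalarTower.of_algebraMap_eq (fun q => by ext; rfl)
  haveI tKL : IsScalarTower ℚ K L :=
    IsScalarTower.of_algebraMap_eq (fun q => by ext; rfl)
  haveI tFC : IsScalarTower ℚ F ℂ := by
    apply IsScalarTower.of_algebraMap_eq'
    exact (RingHom.ext_rat _ _)
  haveI hFDFL : FiniteDimensional F L := FiniteDimensional.right ℚ F L
  haveI hFDKL : FiniteDimensional K L := FiniteDimensional.right ℚ K L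
  haveI : CharZero F := charZero_of_injective_algebraMap (algebraMap ℚ F).injective
  haveI : CharZero K := charZero_of_injective_algebraMap (algebraMap ℚ K).injective
  set r : (L →ₐ[ℚ] ℂ) → (K →+* ℂ) :=
    fun ψ => ψ.toRingHom.comp (IntermediateField.inclusion hKL).toRingHom with hr
  set T : Finset (L →ₐ[ℚ] ℂ) :=
    Finset.univ.filter
      (fun ψ => ∀ x : F, ψ (IntermediateField.inclusion hFL x) = σ (algebraMap F Qbar x)) with hT
  have hTcard : T.card = Module.finrank F L := by
    rw [← AlgHom.card F L ℂ]
    rw [hT, ← Fintype.card_subtype]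
    apply Fintype.card_congr
    refine ⟨fun ψ => ⟨ψ.1.toRingHom, fun x => ψ.2 x⟩,
      fun φ => ⟨⟨φ.toRingHom, fun q => ?_⟩, fun x => φ.commutes x⟩, ?_, ?_⟩
    · rw [IsScalarTower.algebraMap_apply ℚ F L, IsScalarTower.algebraMap_apply ℚ F ℂ]
      exact φ.commutes _
    · intro ψ; ext; rfl
    · intro φ; ext; rfl
  have hfiber : ∀ κ ∈ T.image r, (T.filter (fun ψ => r ψ = κ)).card ≤ Module.finrank K L := by
    intro κ _
    letI aKC : Algebra K ℂ := κ.toAlgebra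
    rw [← AlgHom.card K L ℂ, ← Fintype.card_coe (T.filter (fun ψ => r ψ = κ))]
    apply Fintype.card_le_of_injective
      (fun ψ => (⟨ψ.1.toRingHom, fun x => by
        have h2 := (Finset.mem_filter.mp ψ.2).2
        exact DFunLike.congr_fun h2 x⟩ : L →ₐ[K] ℂ))
    intro ψ1 ψ2 h
    apply Subtype.ext
    apply AlgHom.ext
    intro x
    exact DFunLike.congr_fun (congrArg AlgHom.toRingHom h) x
  have hcount : T.card ≤ Module.finrank K L * (T.image r).card :=
    Finset.card_le_mul_card_image T _ (fun b hb => hfiber b hb)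
  refine ⟨T.image r, ?_, ?_⟩
  · have h1 : Module.finrank ℚ F * Module.finrank F L = Module.finrank ℚ L :=
      Module.finrank_mul_finrank ℚ F L
    have h2 : Module.finrank ℚ K * Module.finrank K L = Module.finrank ℚ L :=
      Module.finrank_mul_finrank ℚ K L
    have hposF : 0 < Module.finrank ℚ F := Module.finrank_pos
    have hposK : 0 < Module.finrank ℚ K := Module.finrank_pos
    have hposKL : 0 < Module.finrank K L := Module.finrank_pos
    have hQ : Module.finrank ℚ K * (Module.finrank ℚ F * Module.finrank F L)
        ≤ Module.finrank ℚ K * (Module.finrank ℚ F * (Module.finrank K L * (T.image r).card)) := by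
      rw [← hTcard]
      exact Nat.mul_le_mul_left _ (Nat.mul_le_mul_left _ hcount)
    rw [h1] at hQ
    have hQ2 : Module.finrank ℚ K * Module.finrank ℚ L
        ≤ (T.image r).card * Module.finrank ℚ F * Module.finrank ℚ L := by
      calc Module.finrank ℚ K * Module.finrank ℚ L
          ≤ Module.finrank ℚ K * (Module.finrank ℚ F * (Module.finrank K L * (T.image r).card)) := hQ
        _ = (T.image r).card * Module.finrank ℚ F * (Module.finrank ℚ K * Module.finrank K L) := by ring
        _ = (T.image r).card * Module.finrank ℚ F * Module.finrank ℚ L := by rw [h2]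
    have hposL : 0 < Module.finrank ℚ L := Module.finrank_pos
    have := Nat.le_of_mul_le_mul_right (by
      calc Module.finrank ℚ K * Module.finrank ℚ L ≤ _ := hQ2) hposL
    exact_mod_cast this
  · intro κ hκ
    obtain ⟨ψ, hψT, hψκ⟩ := Finset.mem_image.mp hκ
    have hψF := (Finset.mem_filter.mp hψT).2
    letI aLC : Algebra L ℂ := ψ.toRingHom.toAlgebra
    haveI : Algebra.IsAlgebraic L Qbar := Algebra.IsAlgebraic.tower_top (K := ℚ) L
    set ψhat : Qbar →ₐ[L] ℂ := IsAlgClosed.lift with hψhat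
    have hcomm : ∀ a : L, ψhat.toRingHom (algebraMap L Qbar a) = ψ a := fun a => ψhat.commutes a
    refine ⟨ψhat.toRingHom, fun a => ?_, fun a => ?_⟩
    · have h1 : (algebraMap K Qbar a : Qbar)
          = algebraMap L Qbar (IntermediateField.inclusion hKL a) := rfl
      have h2 : (a : Qbar) = algebraMap K Qbar a := rfl
      rw [h2, h1, hcomm]
      rw [← hψκ]
      rfl
    · have h1 : (a : Qbar) = algebraMap L Qbar (IntermediateField.inclusion hFL a) := rfl
      rw [h1, hcomm]
      exact hψF a

lemma foldr_two_ge_one {K : Type*} (g : K → ℝ) (x y : K) :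
    1 ≤ (([x, y]).map g).foldr max 1 := by
  simp only [List.map_cons, List.map_nil, List.foldr_cons, List.foldr_nil]
  exact le_trans (le_max_right _ _) (le_max_right _ _)

lemma foldr_two_ge_snd {K : Type*} (g : K → ℝ) (x y : K) :
    g y ≤ (([x, y]).map g).foldr max 1 := by
  simp only [List.map_cons, List.map_nil, List.foldr_cons, List.foldr_nil]
  exact le_trans (le_max_left _ _) (le_max_right _ _)

lemma height_lb (K : IntermediateField ℚ Qbar) (hfd : FiniteDimensional ℚ K)
    (xe ye : K) (S : Finset (K →+* ℂ)) (R : ℝ)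
    (hS : ∀ κ ∈ S, 1 ≤ Complex.abs (κ ye) ∧ R ≤ Real.log (Complex.abs (κ ye))) :
    (S.card : ℝ) * R / (Module.finrank ℚ K : ℝ) ≤ heightK K hfd [xe, ye] := by
  classical
  haveI : CharZero K := charZero_of_injective_algebraMap (algebraMap ℚ K).injective
  haveI nfK : NumberField K := { to_charZero := inferInstance, to_finiteDimensional := hfd }
  unfold heightK
  have hrank : (0:ℝ) < (Module.finrank ℚ K : ℝ) := by
    exact_mod_cast Module.finrank_pos
  have hfin : (0:ℝ) ≤ ∑ᶠ v : HeightOneSpectrum (𝓞 K),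
      Real.log ((([xe, ye]).map (fun a => localFin v a)).foldr max 1) := by
    apply finsum_nonneg
    intro v
    exact Real.log_nonneg (foldr_two_ge_one _ _ _)
  set h : InfinitePlace K → ℝ :=
    fun w => Real.log ((([xe, ye]).map (fun a => w a)).foldr max 1) with hh
  have hh0 : ∀ w, 0 ≤ h w := fun w => Real.log_nonneg (foldr_two_ge_one _ _ _)
  have hinf : (S.card : ℝ) * R ≤ ∑ᶠ w : InfinitePlace K, (w.mult : ℝ) * h w := by
    rw [finsum_eq_sum_of_fintype]
    have step1 : (S.card : ℝ) * R ≤ ∑ κ ∈ S, h (InfinitePlace.mk κ) := by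
      calc (S.card : ℝ) * R = ∑ _κ ∈ S, R := by rw [Finset.sum_const, nsmul_eq_mul]
        _ ≤ ∑ κ ∈ S, h (InfinitePlace.mk κ) := by
            apply Finset.sum_le_sum
            intro κ hκ
            obtain ⟨h1, h2⟩ := hS κ hκ
            have h3 : Complex.abs (κ ye) ≤ (([xe, ye]).map (fun a => (InfinitePlace.mk κ) a)).foldr max 1 := by
              have := foldr_two_ge_snd (fun a => (InfinitePlace.mk κ) a) xe ye
              rwa [NumberField.InfinitePlace.apply] at this
            calc R ≤ Real.log (Complex.abs (κ ye)) := h2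
              _ ≤ h (InfinitePlace.mk κ) := Real.log_le_log (by linarith) h3
    have step2 : ∑ κ ∈ S, h (InfinitePlace.mk κ) ≤ ∑ w : InfinitePlace K, (w.mult : ℝ) * h w := by
      rw [Finset.sum_comp]
      have step2a : ∀ w ∈ S.image (fun κ => InfinitePlace.mk κ),
          ((S.filter (fun κ => InfinitePlace.mk κ = w)).card) • h w ≤ (w.mult : ℝ) * h w := by
        intro w _
        rw [nsmul_eq_mul]
        apply mul_le_mul_of_nonneg_right _ (hh0 w)
        have hsub : (S.filter (fun κ => InfinitePlace.mk κ = w)).card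
            ≤ (Finset.univ.filter (fun κ : K →+* ℂ => InfinitePlace.mk κ = w)).card :=
          Finset.card_le_card (Finset.filter_subset_filter _ (Finset.subset_univ S))
        have hmult := NumberField.InfinitePlace.card_filter_mk_eq w
        rw [hmult] at hsub
        exact_mod_cast hsub
      calc ∑ w ∈ S.image (fun κ => InfinitePlace.mk κ),
            ((S.filter (fun κ => InfinitePlace.mk κ = w)).card) • h w
          ≤ ∑ w ∈ S.image (fun κ => InfinitePlace.mk κ), (w.mult : ℝ) * h w :=
            Finset.sum_le_sum step2a
        _ ≤ ∑ w : InfinitePlace K, (w.mult : ℝ) * h w := by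
            apply Finset.sum_le_sum_of_subset_of_nonneg (Finset.subset_univ _)
            intro w _ _
            exact mul_nonneg (by positivity) (hh0 w)
    linarith
  rw [div_eq_inv_mul]
  apply mul_le_mul_of_nonneg_left _ (by positivity : (0:ℝ) ≤ (Module.finrank ℚ K : ℝ)⁻¹)
  calc (S.card : ℝ) * R ≤ (∑ᶠ w : InfinitePlace K, (w.mult : ℝ) * h w) + 0 := by linarith
    _ ≤ _ := by
        apply add_le_add (le_refl _) hfin

end Stmt17Aux

/-- Let `d ≥ 4`, `p` prime, `x₀ ∈ ℚ̄` a root of `x^{d-2} - x - p^{-(d-3)}`, and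
`(x_n,y_n)_{n≥0}` a backward orbit of `(x₀,x₀)` under `f_{d,p}`.  Let `t ∈ ℝ` with either
(`d ≥ 5` and `t ≥ 1`) or (`d = 4` and `t ≥ (1+√3)/2`).  If for some index `n₀` and some
ring embedding `σ : ℚ̄ → ℂ` one has `|σ(y_{n₀})| ≥ (1 + 1/(2t))|σ(x_{n₀})|` and
`|σ(x_{n₀})| ≥ t`, then (a) for every `0 < C < (d-1)/2` the affine Weil height of
`(x_n,y_n)` (computed in any number field `K ⊆ ℚ̄` containing the coordinates) is
eventually at least `C^n`; and (b) the set `{(x_n,y_n)}` is Zariski dense in `𝔸²_ℚ̄`. -/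
theorem stmt17 (d p : ℕ) (hd : 4 ≤ d) (hp : p.Prime)
    (x₀ : Qbar) (hx₀ : x₀ ^ (d - 2) - x₀ - ((p : Qbar) ^ (d - 3))⁻¹ = 0)
    (s : ℕ → Qbar × Qbar) (hs : IsBackwardOrbit d p x₀ s)
    (t : ℝ) (ht : (5 ≤ d ∧ 1 ≤ t) ∨ (d = 4 ∧ (1 + Real.sqrt 3) / 2 ≤ t))
    (n₀ : ℕ) (σ : Qbar →+* ℂ)
    (hσy : (1 + 1 / (2 * t)) * ‖σ (s n₀).1‖ ≤ ‖σ (s n₀).2‖)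
    (hσx : t ≤ ‖σ (s n₀).1‖) :
    (∀ C : ℝ, 0 < C → C < ((d : ℝ) - 1) / 2 →
      ∃ N : ℕ, ∀ n, N ≤ n →
        ∀ (K : IntermediateField ℚ Qbar) (hfd : FiniteDimensional ℚ K)
          (h1 : (s n).1 ∈ K) (h2 : (s n).2 ∈ K),
          C ^ n ≤ heightK K hfd [⟨(s n).1, h1⟩, ⟨(s n).2, h2⟩]) ∧
    (∀ q : MvPolynomial (Fin 2) Qbar,
      (∀ n : ℕ, MvPolynomial.eval ![(s n).1, (s n).2] q = 0) → q = 0) := by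
  classical
  obtain ⟨ht1, htd⟩ := Stmt17Aux.t_facts ht
  constructor
  · -- part (a)
    intro C hC0 hClt
    have hd4 : (4:ℝ) ≤ (d:ℝ) := by exact_mod_cast hd
    have hD2 : (0:ℝ) < ((d:ℝ)-1)/2 := by linarith
    have hlog32 : (0:ℝ) < Real.log (3/2) := Real.log_pos (by norm_num)
    -- the base field F
    set F : IntermediateField ℚ Qbar :=
      IntermediateField.adjoin ℚ {(s n₀).1} ⊔ IntermediateField.adjoin ℚ {(s n₀).2} with hF
    haveI hFfd : FiniteDimensional ℚ F := by
      haveI h1 : FiniteDimensional ℚ (IntermediateField.adjoin ℚ {(s n₀).1}) :=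
        IntermediateField.adjoin.finiteDimensional
          ((Algebra.IsAlgebraic.isAlgebraic _).isIntegral)
      haveI h2 : FiniteDimensional ℚ (IntermediateField.adjoin ℚ {(s n₀).2}) :=
        IntermediateField.adjoin.finiteDimensional
          ((Algebra.IsAlgebraic.isAlgebraic _).isIntegral)
      exact IntermediateField.finiteDimensional_sup _ _
    have hxF : (s n₀).1 ∈ F := by
      apply (le_sup_left : IntermediateField.adjoin ℚ {(s n₀).1} ≤ F)
      exact IntermediateField.mem_adjoin_simple_self ℚ _
    have hyF : (s n₀).2 ∈ F := by
      apply (le_sup_right : IntermediateField.adjoin ℚ {(s n₀).2} ≤ F)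
      exact IntermediateField.mem_adjoin_simple_self ℚ _
    set D0 : ℕ := Module.finrank ℚ F with hD0
    have hD0pos : (0:ℝ) < (D0:ℝ) := by
      rw [hD0]; exact_mod_cast Module.finrank_pos
    set ρ : ℝ := C / (((d:ℝ)-1)/2) with hρ
    have hρ0 : 0 ≤ ρ := by positivity
    have hρ1 : ρ < 1 := by rw [hρ, div_lt_one hD2]; exact hClt
    set β : ℝ := Real.log (3/2) / ((D0:ℝ) * (((d:ℝ)-1)/2)^(n₀)) with hβ
    have hβ0 : 0 < β := by positivity
    obtain ⟨N1, hN1⟩ := exists_pow_lt_of_lt_one hβ0 hρ1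
    refine ⟨max N1 n₀, ?_⟩
    intro n hn K hfd h1 h2
    obtain ⟨k, hk⟩ := Nat.exists_eq_add_of_le (le_trans (le_max_right N1 n₀) hn)
    have hN1n : N1 ≤ n := le_trans (le_max_left N1 n₀) hn
    subst hk
    haveI := hfd
    obtain ⟨S, hScard, hSgood⟩ := Stmt17Aux.counting F K σ
    set R : ℝ := (((d:ℝ)-1)/2)^k * Real.log (3/2) with hR
    have hR0 : 0 ≤ R := by positivity
    have hSesc : ∀ κ ∈ S, 1 ≤ Complex.abs (κ (⟨(s (n₀+k)).2, h2⟩ : K)) ∧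
        R ≤ Real.log (Complex.abs (κ (⟨(s (n₀+k)).2, h2⟩ : K))) := by
      intro κ hκ
      obtain ⟨ψ, hψK, hψF⟩ := hSgood κ hκ
      have hx : ψ (s n₀).1 = σ (s n₀).1 := hψF ⟨(s n₀).1, hxF⟩
      have hy : ψ (s n₀).2 = σ (s n₀).2 := hψF ⟨(s n₀).2, hyF⟩
      have hψx : t ≤ Complex.abs (ψ (s n₀).1) := by rw [hx]; exact hσx
      have hψy : (1 + 1/(2*t)) * Complex.abs (ψ (s n₀).1) ≤ Complex.abs (ψ (s n₀).2) := by
        rw [hx, hy]; exact hσy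
      have esc := Stmt17Aux.escape hd hp hx₀ hs ht1 htd n₀ ψ hψx hψy k
      have hval : ψ (s (n₀+k)).2 = κ (⟨(s (n₀+k)).2, h2⟩ : K) := hψK ⟨(s (n₀+k)).2, h2⟩
      constructor
      · rw [← hval]; linarith [esc.2.2.1]
      · rw [← hval]; exact esc.2.2.2
    have hlb := Stmt17Aux.height_lb K hfd ⟨(s (n₀+k)).1, h1⟩ ⟨(s (n₀+k)).2, h2⟩ S R hSesc
    have hKpos : (0:ℝ) < (Module.finrank ℚ K : ℝ) := by exact_mod_cast Module.finrank_pos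
    -- C^(n₀+k) ≤ R / D0
    have key1 : C ^ (n₀+k) ≤ R / (D0:ℝ) := by
      have hCeq : C = ρ * (((d:ℝ)-1)/2) := by
        rw [hρ]; exact (div_mul_cancel₀ C hD2.ne').symm
      have hpow : C ^ (n₀+k) = ρ^(n₀+k) * (((d:ℝ)-1)/2)^(n₀+k) := by rw [hCeq, mul_pow]
      have hρn : ρ^(n₀+k) ≤ ρ^N1 := pow_le_pow_of_le_one hρ0 hρ1.le hN1n
      have hρβ : ρ^(n₀+k) < β := lt_of_le_of_lt hρn hN1
      have hpowpos : (0:ℝ) < (((d:ℝ)-1)/2)^(n₀+k) := by positivity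
      have h2' : C ^ (n₀+k) ≤ β * (((d:ℝ)-1)/2)^(n₀+k) := by
        rw [hpow]; exact mul_le_mul_of_nonneg_right hρβ.le hpowpos.le
      have h3 : β * (((d:ℝ)-1)/2)^(n₀+k) = R / (D0:ℝ) := by
        rw [hβ, hR, pow_add]
        have hdne : ((d:ℝ) - 1) ≠ 0 := by linarith
        have hD0ne : (D0:ℝ) ≠ 0 := hD0pos.ne'
        field_simp
      linarith [h3 ▸ h2']
    -- R / D0 ≤ S.card * R / [K:ℚ]
    have key2 : R / (D0:ℝ) ≤ (S.card : ℝ) * R / (Module.finrank ℚ K : ℝ) := by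
      rw [div_le_div_iff₀ hD0pos hKpos]
      nlinarith [mul_le_mul_of_nonneg_left hScard hR0]
    exact le_trans (le_trans key1 key2) hlb
  · exact Stmt17Aux.part_b hd hp hx₀ hs ht n₀ σ hσy hσx
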